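/- arXiv:2011.10340 — 3 statements merged into one kernel-verified Lean document; each statement's English description precedes it below -/
import Mathlib

section
/- The Lie subalgebra Lie(V) ⊂ k[G] is invariant under conjugation by G: for every g ∈ G and x ∈ Lie(V), g x g^{-1} ∈ Lie(V). Thus Lie(V) is a G-subrepresentation of k[G] with the conjugation action. -/
open ExteriorAlgebra

variable (k : Type*) [Field k] {G : Type*} [Group G]
variable {V : Type*} [AddCommGroup V] [Module k V]

/-- The alternating map `v ↦ Σ_p v_1 ∧ … ∧ f(v_p) ∧ … ∧ v_m`, landing in the
exterior algebra. -/
noncomputable def algAlt (f : Module.End k V) (m : ℕ) :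
    V [⋀^Fin m]→ₗ[k] ExteriorAlgebra k V where
  toMultilinearMap :=
    ∑ p : Fin m, (ιMulti k m).toMultilinearMap.compLinearMap
      (Function.update (fun _ : Fin m => (LinearMap.id : V →ₗ[k] V)) p f)
  map_eq_zero_of_eq' := by
    intro v i j hv hij
    show (∑ p : Fin m, (ιMulti k m).toMultilinearMap.compLinearMap
      (Function.update (fun _ : Fin m => (LinearMap.id : V →ₗ[k] V)) p f)) v = 0
    have key : ∀ p : Fin m,
        ((ιMulti k m).toMultilinearMap.compLinearMap
          (Function.update (fun _ : Fin m => (LinearMap.id : V →ₗ[k] V)) p f)) v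
        = ιMulti k m (Function.update v p (f (v p))) := by
      intro p
      have harg : (fun x => (Function.update (fun _ : Fin m => (LinearMap.id : V →ₗ[k] V)) p f x) (v x))
          = Function.update v p (f (v p)) := by
        funext x
        rcases eq_or_ne x p with rfl | hx
        · simp
        · simp [Function.update_of_ne hx]
      rw [MultilinearMap.compLinearMap_apply, harg]
      rfl
    rw [MultilinearMap.sum_apply]
    calc (∑ p : Fin m, ((ιMulti k m).toMultilinearMap.compLinearMap
          (Function.update (fun _ : Fin m => (LinearMap.id : V →ₗ[k] V)) p f)) v)
        = ∑ p ∈ ({i, j} : Finset (Fin m)), ιMulti k m (Function.update v p (f (v p))) := by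
          rw [Finset.sum_congr rfl (fun p _ => key p)]
          refine (Finset.sum_subset (Finset.subset_univ _) ?_).symm
          intro p _ hp
          simp only [Finset.mem_insert, Finset.mem_singleton, not_or] at hp
          exact AlternatingMap.map_eq_zero_of_eq _ _
            (by rw [Function.update_of_ne (Ne.symm ?_), Function.update_of_ne (Ne.symm ?_), hv]
                exacts [hp.2, hp.1]) hij
      _ = 0 := by
          rw [Finset.sum_pair hij]
          have hcomp : Function.update v j (f (v j))
              = (Function.update v i (f (v i))) ∘ Equiv.swap i j := by
            funext x
            rcases eq_or_ne x i with rfl | hxi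
            · show Function.update v j (f (v j)) x = Function.update v x (f (v x)) (Equiv.swap x j x)
              rw [Function.update_of_ne hij, Equiv.swap_apply_left,
                Function.update_of_ne (Ne.symm hij)]
              exact hv
            rcases eq_or_ne x j with rfl | hxj
            · show Function.update v x (f (v x)) x = Function.update v i (f (v i)) (Equiv.swap i x x)
              rw [Function.update_self, Equiv.swap_apply_right, Function.update_self, hv]
            · show Function.update v j (f (v j)) x = Function.update v i (f (v i)) (Equiv.swap i j x)
              rw [Function.update_of_ne hxj, Equiv.swap_apply_of_ne_of_ne hxi hxj,
                Function.update_of_ne hxi]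
          rw [hcomp, AlternatingMap.map_swap _ _ hij, add_neg_cancel]

/-- The derivation `D_f` on the exterior algebra extending `f : V → V`. -/
noncomputable def derOp (f : Module.End k V) :
    ExteriorAlgebra k V →ₗ[k] ExteriorAlgebra k V :=
  ExteriorAlgebra.liftAlternating (fun m => algAlt k f m)

theorem derOp_mem (f : Module.End k V) (m : ℕ) :
    ∀ x ∈ ⋀[k]^m V, derOp k f x ∈ ⋀[k]^m V := by
  intro x hx
  rw [← ExteriorAlgebra.ιMulti_span_fixedDegree] at hx ⊢
  induction hx using Submodule.span_induction with
  | mem x hx =>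
      obtain ⟨v, rfl⟩ := hx
      rw [derOp, ExteriorAlgebra.liftAlternating_apply_ιMulti]
      show (∑ p : Fin m, (ιMulti k m).toMultilinearMap.compLinearMap
        (Function.update (fun _ : Fin m => (LinearMap.id : V →ₗ[k] V)) p f)) v ∈ _
      rw [MultilinearMap.sum_apply]
      refine Submodule.sum_mem _ fun p _ => Submodule.subset_span ⟨_, rfl⟩
  | zero => simp
  | add x y _ _ hx hy => rw [map_add]; exact Submodule.add_mem _ hx hy
  | smul c x _ hx => rw [map_smul]; exact Submodule.smul_mem _ c hx

theorem mapOp_mem (f : Module.End k V) (m : ℕ) :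
    ∀ x ∈ ⋀[k]^m V, (ExteriorAlgebra.map f) x ∈ ⋀[k]^m V := by
  intro x hx
  rw [← ExteriorAlgebra.ιMulti_span_fixedDegree] at hx ⊢
  induction hx using Submodule.span_induction with
  | mem x hx =>
      obtain ⟨v, rfl⟩ := hx
      rw [ExteriorAlgebra.map_apply_ιMulti]
      exact Submodule.subset_span ⟨_, rfl⟩
  | zero => simp
  | add x y _ _ hx hy => rw [map_add]; exact Submodule.add_mem _ hx hy
  | smul c x _ hx => rw [map_smul]; exact Submodule.smul_mem _ c hx

/-- `Grp_m : k[G] → End(Λ^m V)`, the linear extension of `g ↦ (v₁∧…∧vₘ ↦ g v₁∧…∧g vₘ)`. -/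
noncomputable def GrpOp (ρ : Representation k G V) (m : ℕ) :
    MonoidAlgebra k G →ₗ[k] Module.End k (⋀[k]^m V) :=
  Finsupp.lift (Module.End k (⋀[k]^m V)) k G
    (fun g => ((ExteriorAlgebra.map (ρ g)).toLinearMap).restrict (mapOp_mem k (ρ g) m))
      ∘ₗ (MonoidAlgebra.coeffLinearEquiv k).toLinearMap

/-- `Alg_m : k[G] → End(Λ^m V)`, the linear extension of
`g ↦ (v₁∧…∧vₘ ↦ Σ_p v₁∧…∧g vₚ∧…∧vₘ)`. -/
noncomputable def AlgOp (ρ : Representation k G V) (m : ℕ) :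
    MonoidAlgebra k G →ₗ[k] Module.End k (⋀[k]^m V) :=
  Finsupp.lift (Module.End k (⋀[k]^m V)) k G
    (fun g => (derOp k (ρ g)).restrict (derOp_mem k (ρ g) m))
      ∘ₗ (MonoidAlgebra.coeffLinearEquiv k).toLinearMap

/-- `x ∈ k[G]` is a Lie element for the representation `ρ` if `Grp_m x = Alg_m x`
for all `m = 0, 1, …, dim V`. -/
def IsLieElement (ρ : Representation k G V) (x : MonoidAlgebra k G) : Prop :=
  ∀ m ≤ Module.finrank k V, GrpOp k ρ m x = AlgOp k ρ m x


lemma derOp_apply_ιMulti (f : Module.End k V) (m : ℕ) (v : Fin m → V) :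
    derOp k f (ιMulti k m v) = ∑ p : Fin m, ιMulti k m (Function.update v p (f (v p))) := by
  rw [derOp, ExteriorAlgebra.liftAlternating_apply_ιMulti]
  show (∑ p : Fin m, (ιMulti k m).toMultilinearMap.compLinearMap
    (Function.update (fun _ : Fin m => (LinearMap.id : V →ₗ[k] V)) p f)) v = _
  rw [MultilinearMap.sum_apply]
  refine Finset.sum_congr rfl fun p _ => ?_
  have harg : (fun x => (Function.update (fun _ : Fin m => (LinearMap.id : V →ₗ[k] V)) p f x) (v x))
      = Function.update v p (f (v p)) := by
    funext x
    rcases eq_or_ne x p with rfl | hx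
    · simp
    · simp [Function.update_of_ne hx]
  rw [MultilinearMap.compLinearMap_apply, harg]
  rfl

lemma derOp_conj (A B f : Module.End k V) (hAB : ∀ v, A (B v) = v) (x : ExteriorAlgebra k V) :
    ExteriorAlgebra.map A (derOp k f (ExteriorAlgebra.map B x)) = derOp k (A ∘ₗ f ∘ₗ B) x := by
  have hx : x ∈ (⊤ : Submodule k (ExteriorAlgebra k V)) := trivial
  rw [← ExteriorAlgebra.ιMulti_span] at hx
  induction hx using Submodule.span_induction with
  | mem x hx =>
      obtain ⟨⟨n, v⟩, rfl⟩ := hx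
      rw [ExteriorAlgebra.map_apply_ιMulti, derOp_apply_ιMulti, derOp_apply_ιMulti, map_sum]
      refine Finset.sum_congr rfl fun p _ => ?_
      rw [ExteriorAlgebra.map_apply_ιMulti]
      congr 1
      funext i
      rcases eq_or_ne i p with rfl | h
      · simp
      · simp [Function.update_of_ne h, hAB]
  | zero => simp
  | add x y _ _ hx hy => simp only [map_add, hx, hy]
  | smul c x _ hx => simp only [map_smul, hx]

lemma GrpOp_single (ρ : Representation k G V) (m : ℕ) (h : G) (c : k) :
    GrpOp k ρ m (MonoidAlgebra.single h c)
      = c • ((ExteriorAlgebra.map (ρ h)).toLinearMap).restrict (mapOp_mem k (ρ h) m) := by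
  rw [GrpOp, LinearMap.comp_apply]; erw [Finsupp.lift_apply,
    Finsupp.sum_single_index
      (zero_smul k (((ExteriorAlgebra.map (ρ h)).toLinearMap).restrict (mapOp_mem k (ρ h) m)))]

lemma AlgOp_single (ρ : Representation k G V) (m : ℕ) (h : G) (c : k) :
    AlgOp k ρ m (MonoidAlgebra.single h c)
      = c • (derOp k (ρ h)).restrict (derOp_mem k (ρ h) m) := by
  rw [AlgOp, LinearMap.comp_apply]; erw [Finsupp.lift_apply,
    Finsupp.sum_single_index
      (zero_smul k ((derOp k (ρ h)).restrict (derOp_mem k (ρ h) m)))]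

/-- `Lie(V)` is invariant under conjugation by `G`: for `g ∈ G` and a Lie element `x`,
`g x g⁻¹` is again a Lie element; thus `Lie(V)` is a `G`-subrepresentation of `k[G]`
under the conjugation action. -/
theorem isLieElement_conj {k : Type*} [Field k] {G : Type*} [Group G]
    {V : Type*} [AddCommGroup V] [Module k V]
    (ρ : Representation k G V) (g : G) (x : MonoidAlgebra k G)
    (hx : IsLieElement k ρ x) :
    IsLieElement k ρ
      (MonoidAlgebra.of k G g * x * MonoidAlgebra.of k G g⁻¹) := by
  intro m hm
  set Mg := ((ExteriorAlgebra.map (ρ g)).toLinearMap).restrict (mapOp_mem k (ρ g) m) with hMg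
  set Mg' := ((ExteriorAlgebra.map (ρ g⁻¹)).toLinearMap).restrict (mapOp_mem k (ρ g⁻¹) m) with hMg'
  have hρconj : ∀ h : G, ρ (g * h * g⁻¹) = (ρ g) ∘ₗ (ρ h) ∘ₗ (ρ g⁻¹) := by
    intro h
    ext v
    simp [map_mul ρ, Module.End.mul_apply]
  have hAB : ∀ v : V, ρ g (ρ g⁻¹ v) = v := by
    intro v
    rw [← Module.End.mul_apply, ← map_mul, mul_inv_cancel, map_one, Module.End.one_apply]
  have hmapconj : ∀ (h : G) (w : ExteriorAlgebra k V),
      ExteriorAlgebra.map (ρ (g * h * g⁻¹)) w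
        = ExteriorAlgebra.map (ρ g) (ExteriorAlgebra.map (ρ h)
            (ExteriorAlgebra.map (ρ g⁻¹) w)) := by
    intro h w
    rw [hρconj h, ← ExteriorAlgebra.map_comp_map, ← ExteriorAlgebra.map_comp_map]
    rfl
  have hGrp : ∀ y : MonoidAlgebra k G,
      GrpOp k ρ m (MonoidAlgebra.of k G g * y * MonoidAlgebra.of k G g⁻¹)
        = Mg ∘ₗ GrpOp k ρ m y ∘ₗ Mg' := by
    intro y
    induction y using MonoidAlgebra.induction_linear with
    | zero => simp
    | add a b ha hb =>
        rw [mul_add, add_mul, map_add, ha, hb, map_add]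
        ext w
        simp
    | single h c =>
        have : (MonoidAlgebra.of k G g) * MonoidAlgebra.single h c * MonoidAlgebra.of k G g⁻¹
            = MonoidAlgebra.single (g * h * g⁻¹) c := by
          simp [MonoidAlgebra.of_apply, MonoidAlgebra.single_mul_single]
        rw [this, GrpOp_single, GrpOp_single]
        refine LinearMap.ext fun w => Subtype.ext ?_
        simp only [LinearMap.smul_apply, LinearMap.coe_comp, Function.comp_apply, hMg, hMg',
          Submodule.coe_smul, LinearMap.restrict_coe_apply, LinearMap.map_smul]
        show c • ExteriorAlgebra.map (ρ (g * h * g⁻¹)) (w : ExteriorAlgebra k V) = c • ExteriorAlgebra.map (ρ g) (ExteriorAlgebra.map (ρ h) (ExteriorAlgebra.map (ρ g⁻¹) (w : ExteriorAlgebra k V)))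
        rw [hmapconj]
  have hAlg : ∀ y : MonoidAlgebra k G,
      AlgOp k ρ m (MonoidAlgebra.of k G g * y * MonoidAlgebra.of k G g⁻¹)
        = Mg ∘ₗ AlgOp k ρ m y ∘ₗ Mg' := by
    intro y
    induction y using MonoidAlgebra.induction_linear with
    | zero => simp
    | add a b ha hb =>
        rw [mul_add, add_mul, map_add, ha, hb, map_add]
        ext w
        simp
    | single h c =>
        have : (MonoidAlgebra.of k G g) * MonoidAlgebra.single h c * MonoidAlgebra.of k G g⁻¹
            = MonoidAlgebra.single (g * h * g⁻¹) c := by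
          simp [MonoidAlgebra.of_apply, MonoidAlgebra.single_mul_single]
        rw [this, AlgOp_single, AlgOp_single]
        refine LinearMap.ext fun w => Subtype.ext ?_
        simp only [LinearMap.smul_apply, LinearMap.coe_comp, Function.comp_apply, hMg, hMg',
          Submodule.coe_smul, LinearMap.restrict_coe_apply, LinearMap.map_smul]
        show c • derOp k (ρ (g * h * g⁻¹)) (w : ExteriorAlgebra k V) = c • ExteriorAlgebra.map (ρ g) (derOp k (ρ h) (ExteriorAlgebra.map (ρ g⁻¹) (w : ExteriorAlgebra k V)))
        rw [hρconj h, ← derOp_conj k (ρ g) (ρ g⁻¹) (ρ h) hAB]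
  rw [hGrp, hAlg, hx m hm]
end

section
/- For any n×n matrix A = (a_{ij}), sdet(A, I) = (−1)^n Σ_{σ ∈ S_n} (−2)^{ν(σ)} a_{1σ(1)} ⋯ a_{nσ(n)}, where ν(σ) is the number of cycles of σ (including fixed points) and I is the identity matrix. -/
/-- The `I`-shuffle of `A` and `B`: the matrix whose `i`-th row is the `i`-th row of `A`
if `i ∈ I` and the `i`-th row of `B` otherwise. -/
def shuffleMatrix {n : ℕ} {R : Type*} (A B : Matrix (Fin n) (Fin n) R)
    (I : Finset (Fin n)) : Matrix (Fin n) (Fin n) R :=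
  fun i j => if i ∈ I then A i j else B i j

/-- The shuffle determinant `sdet(A,B) = Σ_I det((A,B)_I) det((A,B)_{Ī})`. -/
def sdet {n : ℕ} {R : Type*} [CommRing R] (A B : Matrix (Fin n) (Fin n) R) : R :=
  ∑ I : Finset (Fin n), (shuffleMatrix A B I).det * (shuffleMatrix A B Iᶜ).det

/-- The number of cycles of a permutation, including fixed points. -/
def numCycles {n : ℕ} (σ : Equiv.Perm (Fin n)) : ℕ :=
  Multiset.card σ.cycleType + (Finset.univ.filter fun i => σ i = i).card

namespace SdetAux

open Equiv Finset

variable {n : ℕ} {R : Type*} [CommRing R]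

/-- Permutations fixing every point outside `I`. -/
def permsOn (n : ℕ) (I : Finset (Fin n)) : Finset (Equiv.Perm (Fin n)) :=
  univ.filter fun σ => ∀ i ∉ I, σ i = i

lemma mem_permsOn {I : Finset (Fin n)} {σ : Equiv.Perm (Fin n)} :
    σ ∈ permsOn n I ↔ ∀ i ∉ I, σ i = i := by simp [permsOn]

lemma permsOn_maps {I : Finset (Fin n)} {σ : Equiv.Perm (Fin n)}
    (hσ : σ ∈ permsOn n I) {i : Fin n} (hi : i ∈ I) : σ i ∈ I := by
  by_contra h
  have h2 : σ (σ i) = σ i := mem_permsOn.mp hσ _ h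
  have h3 : σ i = i := σ.injective h2
  rw [h3] at h
  exact h hi

lemma det_shuffleMatrix_one (A : Matrix (Fin n) (Fin n) R) (I : Finset (Fin n)) :
    (shuffleMatrix A 1 I).det
      = ∑ σ ∈ permsOn n I, ((Equiv.Perm.sign σ : ℤ) : R) *
          ∏ i, (if i ∈ I then A (σ i) i else 1) := by
  rw [Matrix.det_apply']
  rw [← Finset.sum_subset (subset_univ (permsOn n I))]
  · refine Finset.sum_congr rfl fun σ hσ => ?_
    congr 1
    refine Finset.prod_congr rfl fun i _ => ?_
    by_cases hi : i ∈ I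
    · have := permsOn_maps hσ hi
      simp [shuffleMatrix, this, hi]
    · have h2 := mem_permsOn.mp hσ _ hi
      rw [h2]
      simp [shuffleMatrix, hi, Matrix.one_apply]
  · intro σ _ hσ
    rw [mem_permsOn] at hσ
    push_neg at hσ
    obtain ⟨i, hiI, hne⟩ := hσ
    have hne' : i ≠ σ⁻¹ i := by
      intro h
      apply hne
      conv_lhs => rw [h]
      exact σ.apply_symm_apply i
    have hz : shuffleMatrix A 1 I (σ (σ⁻¹ i)) (σ⁻¹ i) = 0 := by
      rw [← Equiv.Perm.mul_apply, mul_inv_cancel, Equiv.Perm.one_apply]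
      simp [shuffleMatrix, hiI, Matrix.one_apply, hne']
      exact fun h => absurd h hne'
    apply mul_eq_zero_of_right
    exact Finset.prod_eq_zero (mem_univ (σ⁻¹ i)) hz

lemma invariant_iff (π : Equiv.Perm (Fin n)) (I : Finset (Fin n))
    (h : ∀ i ∈ I, π i ∈ I) : ∀ x, x ∈ I ↔ π x ∈ I := by
  have himg : I.image π = I := by
    apply Finset.eq_of_subset_of_card_le
    · intro x hx
      obtain ⟨y, hy, rfl⟩ := Finset.mem_image.mp hx
      exact h y hy
    · rw [Finset.card_image_of_injective _ π.injective]
  intro x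
  constructor
  · exact h x
  · intro hx
    rw [← himg] at hx
    obtain ⟨y, hy, hxy⟩ := Finset.mem_image.mp hx
    rwa [← π.injective hxy]

lemma invariant_iff_compl (π : Equiv.Perm (Fin n)) (I : Finset (Fin n))
    (h : ∀ i ∈ I, π i ∈ I) : ∀ x : Fin n, x ∈ Iᶜ ↔ π x ∈ Iᶜ := by
  intro x
  simp only [Finset.mem_compl]
  exact not_congr (invariant_iff π I h x)

lemma ofSubtype_subtypePerm_apply {p : Fin n → Prop} [DecidablePred p]
    (π : Equiv.Perm (Fin n)) (h : ∀ x, p x ↔ p (π x)) (a : Fin n) :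
    Equiv.Perm.ofSubtype (π.subtypePerm (fun x => (h x).symm)) a = if p a then π a else a := by
  by_cases ha : p a
  · rw [if_pos ha, Equiv.Perm.ofSubtype_apply_of_mem _ ha, Equiv.Perm.subtypePerm_apply]
  · rw [if_neg ha, Equiv.Perm.ofSubtype_apply_of_not_mem _ ha]

/-- Decompose an `I`-invariant permutation into its `I`-part and `Iᶜ`-part. -/
def decompose (π : Equiv.Perm (Fin n)) (I : Finset (Fin n)) (h : ∀ i ∈ I, π i ∈ I) :
    Equiv.Perm (Fin n) × Equiv.Perm (Fin n) :=
  (Equiv.Perm.ofSubtype (π.subtypePerm (p := (· ∈ I)) (fun x => (invariant_iff π I h x).symm)),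
   Equiv.Perm.ofSubtype (π.subtypePerm (p := (· ∈ Iᶜ)) (fun x => (invariant_iff_compl π I h x).symm)))

lemma decompose_fst_apply (π : Equiv.Perm (Fin n)) (I : Finset (Fin n))
    (h : ∀ i ∈ I, π i ∈ I) (a : Fin n) :
    (decompose π I h).1 a = if a ∈ I then π a else a :=
  ofSubtype_subtypePerm_apply π (invariant_iff π I h) a

lemma decompose_snd_apply (π : Equiv.Perm (Fin n)) (I : Finset (Fin n))
    (h : ∀ i ∈ I, π i ∈ I) (a : Fin n) :
    (decompose π I h).2 a = if a ∈ Iᶜ then π a else a :=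
  ofSubtype_subtypePerm_apply π (invariant_iff_compl π I h) a

lemma decompose_fst_mem (π : Equiv.Perm (Fin n)) (I : Finset (Fin n))
    (h : ∀ i ∈ I, π i ∈ I) : (decompose π I h).1 ∈ permsOn n I := by
  rw [mem_permsOn]
  intro i hi
  rw [decompose_fst_apply, if_neg hi]

lemma decompose_snd_mem (π : Equiv.Perm (Fin n)) (I : Finset (Fin n))
    (h : ∀ i ∈ I, π i ∈ I) : (decompose π I h).2 ∈ permsOn n Iᶜ := by
  rw [mem_permsOn]
  intro i hi
  rw [decompose_snd_apply, if_neg hi]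

lemma decompose_mul (π : Equiv.Perm (Fin n)) (I : Finset (Fin n))
    (h : ∀ i ∈ I, π i ∈ I) : (decompose π I h).1 * (decompose π I h).2 = π := by
  ext a
  rw [Equiv.Perm.mul_apply]
  by_cases ha : a ∈ I
  · rw [decompose_snd_apply, if_neg (by simpa using ha), decompose_fst_apply, if_pos ha]
  · rw [decompose_snd_apply, if_pos (Finset.mem_compl.mpr ha), decompose_fst_apply,
      if_neg (fun hc => ha ((invariant_iff π I h a).mpr hc))]

lemma sdet_one_step (A : Matrix (Fin n) (Fin n) R) :
    sdet A 1 = ∑ I : Finset (Fin n),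
      ∑ π ∈ univ.filter (fun π : Equiv.Perm (Fin n) => ∀ i ∈ I, π i ∈ I),
        ((Equiv.Perm.sign π : ℤ) : R) * ∏ i, A (π i) i := by
  unfold sdet
  refine Finset.sum_congr rfl fun I _ => ?_
  rw [det_shuffleMatrix_one, det_shuffleMatrix_one, Finset.sum_mul_sum]
  rw [← Finset.sum_product']
  refine Finset.sum_bij' (fun p (_ : p ∈ permsOn n I ×ˢ permsOn n Iᶜ) => p.1 * p.2)
    (fun π hπ => decompose π I (by simpa using hπ)) ?_ ?_ ?_ ?_ ?_
  · -- maps into filter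
    rintro ⟨σ, τ⟩ hp
    rw [Finset.mem_product] at hp
    simp only [Finset.mem_filter, Finset.mem_univ, true_and]
    intro i hi
    rw [Equiv.Perm.mul_apply, mem_permsOn.mp hp.2 i (by simpa using hi)]
    exact permsOn_maps hp.1 hi
  · -- maps back into product
    intro π hπ
    rw [Finset.mem_product]
    exact ⟨decompose_fst_mem _ _ _, decompose_snd_mem _ _ _⟩
  · -- left inverse
    rintro ⟨σ, τ⟩ hp
    rw [Finset.mem_product] at hp
    have hτI : ∀ a ∈ I, τ a = a := fun a ha =>
      mem_permsOn.mp hp.2 a (by simpa using ha)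
    have hσc : ∀ a ∉ I, σ a = a := mem_permsOn.mp hp.1
    ext1
    · ext a
      rw [decompose_fst_apply]
      by_cases ha : a ∈ I
      · rw [if_pos ha, Equiv.Perm.mul_apply, hτI a ha]
      · rw [if_neg ha, hσc a ha]
    · ext a
      rw [decompose_snd_apply]
      by_cases ha : a ∈ Iᶜ
      · rw [if_pos ha, Equiv.Perm.mul_apply]
        have : τ a ∈ Iᶜ := permsOn_maps hp.2 ha
        rw [hσc _ (by simpa using this)]
      · rw [if_neg ha, hτI a (by simpa using ha)]
  · -- right inverse
    intro π hπ
    exact decompose_mul π I _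
  · -- terms agree
    rintro ⟨σ, τ⟩ hp
    rw [Finset.mem_product] at hp
    have hτI : ∀ a ∈ I, τ a = a := fun a ha =>
      mem_permsOn.mp hp.2 a (by simpa using ha)
    have hσc : ∀ a ∉ I, σ a = a := mem_permsOn.mp hp.1
    rw [mul_mul_mul_comm]
    congr 1
    · rw [map_mul]
      push_cast
      ring
    · rw [← Finset.prod_mul_distrib]
      refine Finset.prod_congr rfl fun a _ => ?_
      by_cases ha : a ∈ I
      · rw [if_pos ha, if_neg (by simpa using ha), mul_one, Equiv.Perm.mul_apply, hτI a ha]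
      · rw [if_neg ha, if_pos (Finset.mem_compl.mpr ha), one_mul, Equiv.Perm.mul_apply]
        have : τ a ∈ Iᶜ := permsOn_maps hp.2 (Finset.mem_compl.mpr ha)
        rw [hσc _ (by simpa using this)]

lemma card_cycleType (π : Equiv.Perm (Fin n)) :
    Multiset.card π.cycleType = π.cycleFactorsFinset.card := by
  rw [Equiv.Perm.cycleType_def, Multiset.card_map]
  rfl

lemma pow_mem_invariant {π : Equiv.Perm (Fin n)} {I : Finset (Fin n)}
    (h : ∀ i ∈ I, π i ∈ I) (k : ℕ) {x : Fin n} (hx : x ∈ I) : (π ^ k) x ∈ I := by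
  induction k with
  | zero => simpa using hx
  | succ k ih =>
    rw [pow_succ', Equiv.Perm.mul_apply]
    exact h _ ih

lemma card_invariant (π : Equiv.Perm (Fin n)) :
    (univ.filter fun I : Finset (Fin n) => ∀ i ∈ I, π i ∈ I).card = 2 ^ numCycles π := by
  classical
  set F : Finset (Fin n) := univ.filter fun i => π i = i with hF
  set C : Finset (Equiv.Perm (Fin n)) := π.cycleFactorsFinset with hC
  have key : (univ.filter fun I : Finset (Fin n) => ∀ i ∈ I, π i ∈ I).card
      = (F.powerset ×ˢ C.powerset).card := by
    refine Finset.card_bij'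
      (fun I (_ : I ∈ univ.filter fun I : Finset (Fin n) => ∀ i ∈ I, π i ∈ I) =>
        (I ∩ F, C.filter fun c => c.support ⊆ I))
      (fun p _ => p.1 ∪ p.2.biUnion Equiv.Perm.support) ?_ ?_ ?_ ?_
    · intro I hI
      rw [Finset.mem_product]
      exact ⟨Finset.mem_powerset.mpr Finset.inter_subset_right,
             Finset.mem_powerset.mpr (Finset.filter_subset _ _)⟩
    · rintro ⟨F₀, C₀⟩ hp
      rw [Finset.mem_product, Finset.mem_powerset, Finset.mem_powerset] at hp
      simp only [Finset.mem_filter, Finset.mem_univ, true_and]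
      intro x hx
      rcases Finset.mem_union.mp hx with hx1 | hx2
      · have : π x = x := by
          have := hp.1 hx1
          rw [hF] at this
          simpa using this
        rw [this]
        exact Finset.mem_union_left _ hx1
      · obtain ⟨c, hc, hxc⟩ := Finset.mem_biUnion.mp hx2
        have hcC := hp.2 hc
        have hcπ := (Equiv.Perm.mem_cycleFactorsFinset_iff.mp hcC).2 x hxc
        have : π x ∈ c.support := by
          rw [← hcπ]
          exact Equiv.Perm.apply_mem_support.mpr hxc
        exact Finset.mem_union_right _ (Finset.mem_biUnion.mpr ⟨c, hc, this⟩)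
    · -- left inverse
      intro I hI
      simp only [Finset.mem_filter, Finset.mem_univ, true_and] at hI
      apply Finset.Subset.antisymm
      · intro x hx
        rcases Finset.mem_union.mp hx with hx1 | hx2
        · exact (Finset.mem_inter.mp hx1).1
        · obtain ⟨c, hc, hxc⟩ := Finset.mem_biUnion.mp hx2
          exact (Finset.mem_filter.mp hc).2 hxc
      · intro x hx
        by_cases hfix : π x = x
        · exact Finset.mem_union_left _
            (Finset.mem_inter.mpr ⟨hx, by simp [hF, hfix]⟩)
        · have hxs : x ∈ π.support := Equiv.Perm.mem_support.mpr hfix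
          refine Finset.mem_union_right _ (Finset.mem_biUnion.mpr
            ⟨π.cycleOf x, ?_, ?_⟩)
          · refine Finset.mem_filter.mpr ⟨?_, ?_⟩
            · exact Equiv.Perm.cycleOf_mem_cycleFactorsFinset_iff.mpr hxs
            · intro y hy
              have hsc : π.SameCycle x y :=
                (Equiv.Perm.mem_support_cycleOf_iff.mp hy).1
              obtain ⟨k, -, -, hk⟩ := (Equiv.Perm.SameCycle.exists_pow_eq π hsc)
              rw [← hk]
              exact pow_mem_invariant hI k hx
          · exact Equiv.Perm.mem_support_cycleOf_iff.mpr ⟨Equiv.Perm.SameCycle.refl _ _, hxs⟩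
    · -- right inverse
      rintro ⟨F₀, C₀⟩ hp
      rw [Finset.mem_product, Finset.mem_powerset, Finset.mem_powerset] at hp
      obtain ⟨hF₀, hC₀⟩ := hp
      have hdisj : ∀ c ∈ C₀, ∀ x ∈ c.support, x ∉ F₀ := by
        intro c hc x hxc hxF
        have hcπ := (Equiv.Perm.mem_cycleFactorsFinset_iff.mp (hC₀ hc)).2 x hxc
        have hfix : π x = x := by
          have := hF₀ hxF; rw [hF] at this; simpa using this
        rw [hfix] at hcπ
        exact (Equiv.Perm.mem_support.mp hxc) hcπ
      ext1
      · -- first component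
        apply Finset.Subset.antisymm
        · intro x hx
          obtain ⟨hx1, hx2⟩ := Finset.mem_inter.mp hx
          rcases Finset.mem_union.mp hx1 with h1 | h2
          · exact h1
          · obtain ⟨c, hc, hxc⟩ := Finset.mem_biUnion.mp h2
            exfalso
            have hcπ := (Equiv.Perm.mem_cycleFactorsFinset_iff.mp (hC₀ hc)).2 x hxc
            have hfix : π x = x := by rw [hF] at hx2; simpa using hx2
            rw [hfix] at hcπ
            exact (Equiv.Perm.mem_support.mp hxc) hcπ
        · intro x hx
          exact Finset.mem_inter.mpr ⟨Finset.mem_union_left _ hx, hF₀ hx⟩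
      · -- second component
        apply Finset.Subset.antisymm
        · intro c hc
          obtain ⟨hcC, hcsub⟩ := Finset.mem_filter.mp hc
          obtain ⟨x, hxc⟩ := (Equiv.Perm.mem_cycleFactorsFinset_iff.mp hcC).1.nonempty_support
          have hxU := hcsub hxc
          rcases Finset.mem_union.mp hxU with h1 | h2
          · exfalso
            have hcπ := (Equiv.Perm.mem_cycleFactorsFinset_iff.mp hcC).2 x hxc
            have hfix : π x = x := by
              have := hF₀ h1; rw [hF] at this; simpa using this
            rw [hfix] at hcπ
            exact (Equiv.Perm.mem_support.mp hxc) hcπ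
          · obtain ⟨c', hc', hxc'⟩ := Finset.mem_biUnion.mp h2
            have e1 : c = π.cycleOf x := Equiv.Perm.cycle_is_cycleOf hxc hcC
            have e2 : c' = π.cycleOf x := Equiv.Perm.cycle_is_cycleOf hxc' (hC₀ hc')
            rw [e1, ← e2]
            exact hc'
        · intro c hc
          refine Finset.mem_filter.mpr ⟨hC₀ hc, ?_⟩
          intro x hx
          exact Finset.mem_union_right _ (Finset.mem_biUnion.mpr ⟨c, hc, hx⟩)
  rw [key, Finset.card_product, Finset.card_powerset, Finset.card_powerset,
    ← pow_add, numCycles, card_cycleType, add_comm]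

lemma support_card_add_fixed (π : Equiv.Perm (Fin n)) :
    π.support.card + (univ.filter fun i => π i = i).card = n := by
  have h1 : (univ.filter fun i => π i = i) = π.supportᶜ := by
    ext i
    simp [Equiv.Perm.mem_support]
  rw [h1, Finset.card_compl, Fintype.card_fin]
  have := Finset.card_le_univ π.support
  rw [Fintype.card_fin] at this
  omega

lemma sign_cast (π : Equiv.Perm (Fin n)) :
    ((Equiv.Perm.sign π : ℤ) : R) = (-1 : R) ^ (n + numCycles π) := by
  have h1 := Equiv.Perm.sign_of_cycleType π
  have hexp : n + numCycles π
      = (π.cycleType.sum + Multiset.card π.cycleType)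
        + 2 * (univ.filter fun i => π i = i).card := by
    have h2 := support_card_add_fixed π
    rw [numCycles, Equiv.Perm.sum_cycleType]
    omega
  have h2 : ((Equiv.Perm.sign π : ℤ) : R)
      = (-1 : R) ^ (π.cycleType.sum + Multiset.card π.cycleType) := by
    rw [h1]; push_cast; ring
  rw [h2, hexp,
    pow_add (-1 : R) (π.cycleType.sum + Multiset.card π.cycleType)
      (2 * (univ.filter fun i => π i = i).card),
    pow_mul, neg_one_sq, one_pow, mul_one]

lemma numCycles_inv (π : Equiv.Perm (Fin n)) : numCycles π⁻¹ = numCycles π := by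
  rw [numCycles, numCycles, Equiv.Perm.cycleType_inv]
  have h3 : (univ.filter fun i => π⁻¹ i = i) = (univ.filter fun i => π i = i) := by
    ext i
    simp only [Finset.mem_filter, Finset.mem_univ, true_and]
    constructor
    · intro h
      conv_lhs => rw [← h]
      exact π.apply_symm_apply i
    · intro h
      conv_lhs => rw [← h]
      exact π.symm_apply_apply i
  rw [h3]

end SdetAux

/-- `sdet(A, 1) = (−1)^n Σ_{σ ∈ S_n} (−2)^{ν(σ)} a_{1σ(1)} ⋯ a_{nσ(n)}` where `ν(σ)` is
the number of cycles of `σ` (including fixed points). -/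
theorem sdet_one {n : ℕ} {R : Type*} [CommRing R] (A : Matrix (Fin n) (Fin n) R) :
    sdet A 1 = (-1 : R) ^ n *
      ∑ σ : Equiv.Perm (Fin n), (-2 : R) ^ numCycles σ * ∏ i, A i (σ i) := by
  classical
  rw [SdetAux.sdet_one_step]
  simp_rw [Finset.sum_filter]
  rw [Finset.sum_comm]
  simp_rw [← Finset.sum_filter, Finset.sum_const, nsmul_eq_mul, SdetAux.card_invariant]
  rw [Finset.mul_sum]
  refine Fintype.sum_equiv (Equiv.inv (Equiv.Perm (Fin n))) _ _ fun π => ?_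
  simp only [Equiv.inv_apply]
  rw [SdetAux.numCycles_inv, SdetAux.sign_cast]
  have hprod : ∏ i, A i (π⁻¹ i) = ∏ i, A (π i) i := by
    rw [← Equiv.prod_comp π (fun i => A i (π⁻¹ i))]
    refine Finset.prod_congr rfl fun i _ => ?_
    rw [← Equiv.Perm.mul_apply, inv_mul_cancel, Equiv.Perm.one_apply]
  rw [hprod]
  rw [pow_add]
  have : (-2 : R) ^ numCycles π = (-1 : R) ^ numCycles π * 2 ^ numCycles π := by
    rw [← neg_one_mul, mul_pow]
  rw [this]
  push_cast
  ring
end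

section
/- Let ι_n : ℂ[S_n] → ℂ[S_{n+1}] be the algebra homomorphism induced by the embedding of S_n into S_{n+1} as the stabilizer of n+1. Then ι_n maps Lie elements to Lie elements: if u ∈ ℂ[S_n] satisfies Grp_m(u) = Alg_m(u) on Λ^m ℂ^n for all m ≤ n, then ι_n(u) satisfies Grp_m(ι_n(u)) = Alg_m(ι_n(u)) on Λ^m ℂ^{n+1} for all m ≤ n+1. -/
set_option maxHeartbeats 1000000
set_option synthInstance.maxHeartbeats 200000


open ExteriorAlgebra

variable (k : Type*) [Field k] {G : Type*} [Group G]
variable {V : Type*} [AddCommGroup V] [Module k V]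

/-- The permutation representation of `S_n` on `ℂ^n`: `σ` sends the basis vector `v_p`
to `v_{σ(p)}`, i.e. `(σ·x) i = x (σ⁻¹ i)`. -/
noncomputable def permRep (n : ℕ) : Representation ℂ (Equiv.Perm (Fin n)) (Fin n → ℂ) where
  toFun σ := LinearMap.funLeft ℂ ℂ ⇑σ⁻¹
  map_one' := by
    ext v i
    simp
  map_mul' σ τ := by
    refine LinearMap.ext fun v => funext fun i => ?_
    simp [LinearMap.funLeft_apply, Equiv.Perm.mul_apply, mul_inv_rev, Module.End.mul_apply]

/-- The embedding `S_n ↪ S_{n+1}` as the stabilizer of `n+1`, extended linearly to the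
group algebras: `ι_n : ℂ[S_n] → ℂ[S_{n+1}]`. -/
noncomputable def iotaAlg (n : ℕ) :
    MonoidAlgebra ℂ (Equiv.Perm (Fin n)) → MonoidAlgebra ℂ (Equiv.Perm (Fin (n + 1))) :=
  MonoidAlgebra.mapDomain
    (Equiv.Perm.viaEmbeddingHom (Fin.castSuccEmb : Fin n ↪ Fin (n + 1)))


section Helpers


lemma algAlt_apply' (f : Module.End k V) (m : ℕ) (v : Fin m → V) :
    algAlt k f m v = ∑ p : Fin m, ιMulti k m (Function.update v p (f (v p))) := by
  show (∑ p : Fin m, (ιMulti k m).toMultilinearMap.compLinearMap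
      (Function.update (fun _ : Fin m => (LinearMap.id : V →ₗ[k] V)) p f)) v = _
  rw [MultilinearMap.sum_apply]
  refine Finset.sum_congr rfl fun p _ => ?_
  have harg : (fun x => (Function.update (fun _ : Fin m => (LinearMap.id : V →ₗ[k] V)) p f x) (v x))
      = Function.update v p (f (v p)) := by
    funext x
    rcases eq_or_ne x p with rfl | hx
    · simp
    · simp [Function.update_of_ne hx]
  rw [MultilinearMap.compLinearMap_apply, harg]
  rfl

lemma derOp_ιMulti (f : Module.End k V) (m : ℕ) (v : Fin m → V) :
    derOp k f (ιMulti k m v) = algAlt k f m v := by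
  rw [derOp, ExteriorAlgebra.liftAlternating_apply_ιMulti]

lemma GrpOp_apply_coe (ρ : Representation k G V) (m : ℕ) (u : MonoidAlgebra k G)
    (x : ⋀[k]^m V) :
    ((GrpOp k ρ m u x : ⋀[k]^m V) : ExteriorAlgebra k V)
      = u.coeff.sum fun σ a => a • ExteriorAlgebra.map (ρ σ) (x : ExteriorAlgebra k V) := by
  rw [GrpOp, LinearMap.comp_apply]
  erw [Finsupp.lift_apply]
  rw [Finsupp.sum, Finsupp.sum, LinearMap.coe_sum, Finset.sum_apply]
  rw [AddSubmonoidClass.coe_finset_sum]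
  refine Finset.sum_congr rfl fun σ _ => ?_
  rfl

lemma AlgOp_apply_coe (ρ : Representation k G V) (m : ℕ) (u : MonoidAlgebra k G)
    (x : ⋀[k]^m V) :
    ((AlgOp k ρ m u x : ⋀[k]^m V) : ExteriorAlgebra k V)
      = u.coeff.sum fun σ a => a • derOp k (ρ σ) (x : ExteriorAlgebra k V) := by
  rw [AlgOp, LinearMap.comp_apply]
  erw [Finsupp.lift_apply]
  rw [Finsupp.sum, Finsupp.sum, LinearMap.coe_sum, Finset.sum_apply]
  rw [AddSubmonoidClass.coe_finset_sum]
  refine Finset.sum_congr rfl fun σ _ => ?_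
  simp [LinearMap.restrict_coe_apply]

lemma ιMulti_mem_fixedDegree (m : ℕ) (v : Fin m → V) :
    ιMulti k m v ∈ ⋀[k]^m V := by
  rw [← ExteriorAlgebra.ιMulti_span_fixedDegree]
  exact Submodule.subset_span ⟨v, rfl⟩

lemma grp_eq_alg_iff (ρ : Representation k G V) (m : ℕ) (u : MonoidAlgebra k G) :
    GrpOp k ρ m u = AlgOp k ρ m u ↔
      ∀ v : Fin m → V,
        (u.coeff.sum fun σ a => a • ιMulti k m (ρ σ ∘ v))
          = u.coeff.sum fun σ a => a • algAlt k (ρ σ) m v := by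
  constructor
  · intro h v
    have := congrArg (fun T : Module.End k (⋀[k]^m V) =>
      ((T ⟨ιMulti k m v, ιMulti_mem_fixedDegree k m v⟩ : ⋀[k]^m V) : ExteriorAlgebra k V)) h
    simp only [GrpOp_apply_coe, AlgOp_apply_coe] at this
    simpa [ExteriorAlgebra.map_apply_ιMulti, derOp_ιMulti, Function.comp_def] using this
  · intro h
    refine LinearMap.ext fun x => Subtype.ext ?_
    rw [GrpOp_apply_coe, AlgOp_apply_coe]
    have key : ∀ y ∈ (⋀[k]^m V : Submodule k (ExteriorAlgebra k V)),
        (u.coeff.sum fun σ a => a • (ExteriorAlgebra.map (ρ σ)).toLinearMap) y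
          = (u.coeff.sum fun σ a => a • derOp k (ρ σ)) y := by
      rw [← ExteriorAlgebra.ιMulti_span_fixedDegree]
      intro y hy
      refine LinearMap.eqOn_span ?_ hy
      rintro z ⟨v, rfl⟩
      simp only [Finsupp.sum, LinearMap.coe_sum, Finset.sum_apply, LinearMap.smul_apply,
        AlgHom.toLinearMap_apply]
      simpa [Finsupp.sum, ExteriorAlgebra.map_apply_ιMulti, derOp_ιMulti, Function.comp_def] using h v
    have := key (x : ExteriorAlgebra k V) x.2
    simpa [Finsupp.sum, LinearMap.coe_sum, Finset.sum_apply] using this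

lemma altMap_finset_sum_apply {α : Type*} {ι : Type*} (s : Finset α)
    (f : α → (V [⋀^ι]→ₗ[k] ExteriorAlgebra k V)) (v : ι → V) :
    (∑ a ∈ s, f a) v = ∑ a ∈ s, f a v := by
  induction s using Finset.cons_induction with
  | empty => simp
  | cons a s ha ih => rw [Finset.sum_cons, Finset.sum_cons, AlternatingMap.add_apply, ih]

lemma altMap_finsupp_sum_apply {α : Type*} {ι : Type*} (u : α →₀ k)
    (X : α → (V [⋀^ι]→ₗ[k] ExteriorAlgebra k V)) (v : ι → V) :
    (u.sum fun σ a => a • X σ) v = u.sum fun σ a => a • X σ v := by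
  rw [Finsupp.sum, Finsupp.sum, altMap_finset_sum_apply]
  simp only [AlternatingMap.smul_apply]

lemma ιMulti_cons {m : ℕ} (c : V) (t : Fin m → V) :
    ExteriorAlgebra.ιMulti k (m + 1) (Fin.cons c t : Fin (m + 1) → V)
      = ExteriorAlgebra.ι k c * ExteriorAlgebra.ιMulti k m t := by
  have h0 : (Fin.cons c t : Fin (m + 1) → V) 0 = c := by simp
  have ht : Matrix.vecTail (Fin.cons c t : Fin (m + 1) → V) = t := by
    funext p
    simp [Matrix.vecTail]
  rw [ExteriorAlgebra.ιMulti_succ_apply, h0, ht]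

lemma algAlt_cons (f : Module.End k V) {m : ℕ} (c : V) (t : Fin m → V) (hc : f c = c) :
    algAlt k f (m + 1) (Fin.cons c t : Fin (m + 1) → V)
      = ExteriorAlgebra.ιMulti k (m + 1) (Fin.cons c t : Fin (m + 1) → V)
        + ExteriorAlgebra.ι k c * algAlt k f m t := by
  rw [algAlt_apply', algAlt_apply', Fin.sum_univ_succ, Finset.mul_sum]
  congr 1
  · have h1 : Function.update (Fin.cons c t : Fin (m + 1) → V) 0
        (f ((Fin.cons c t : Fin (m + 1) → V) 0)) = (Fin.cons c t : Fin (m + 1) → V) := by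
      rw [show (Fin.cons c t : Fin (m + 1) → V) 0 = c by simp, hc]
      have := Function.update_eq_self 0 (Fin.cons c t : Fin (m + 1) → V)
      rw [show (Fin.cons c t : Fin (m + 1) → V) 0 = c by simp] at this
      exact this
    rw [h1]
  · refine Finset.sum_congr rfl fun p' _ => ?_
    have harg : (Fin.cons c t : Fin (m + 1) → V) p'.succ = t p' := by simp
    rw [harg, ← Fin.cons_update, ιMulti_cons]


end Helpers

section MainProof

open ExteriorAlgebra Equiv.Perm

local notation "φ" => (Equiv.Perm.viaEmbeddingHom (Fin.castSuccEmb : Fin _ ↪ Fin (_ + 1)))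

/-- The inclusion `ℂ^n → ℂ^{n+1}` by zero in the last coordinate. -/
noncomputable def extL (n : ℕ) : (Fin n → ℂ) →ₗ[ℂ] (Fin (n + 1) → ℂ) where
  toFun x := Fin.snoc x 0
  map_add' x y := by
    funext i
    refine Fin.lastCases ?_ (fun l => ?_) i <;> simp
  map_smul' c x := by
    funext i
    refine Fin.lastCases ?_ (fun l => ?_) i <;> simp

lemma extL_single (n : ℕ) (j : Fin n) :
    extL n (Pi.single j 1) = Pi.single (Fin.castSucc j) (1 : ℂ) := by
  funext i
  show (Fin.snoc (Pi.single j (1 : ℂ)) 0 : Fin (n + 1) → ℂ) i = _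
  refine Fin.lastCases ?_ (fun l => ?_) i
  · rw [Fin.snoc_last, Pi.single_eq_of_ne (Fin.castSucc_lt_last j).ne']
  · rw [Fin.snoc_castSucc]
    rcases eq_or_ne l j with rfl | h
    · simp
    · rw [Pi.single_eq_of_ne h, Pi.single_eq_of_ne (by simpa using h)]

lemma permRep_single (n : ℕ) (σ : Equiv.Perm (Fin n)) (j : Fin n) :
    permRep n σ (Pi.single j 1) = Pi.single (σ j) (1 : ℂ) := by
  funext i
  show (Pi.single j 1 : Fin n → ℂ) (σ⁻¹ i) = (Pi.single (σ j) 1 : Fin n → ℂ) i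
  rcases eq_or_ne i (σ j) with rfl | h
  · rw [Equiv.Perm.inv_def, Equiv.symm_apply_apply, Pi.single_eq_same, Pi.single_eq_same]
  · rw [Pi.single_eq_of_ne h, Pi.single_eq_of_ne]
    intro hc
    exact h (by rw [← hc, Equiv.Perm.inv_def, Equiv.apply_symm_apply])

lemma viaEmbedding_castSucc (n : ℕ) (σ : Equiv.Perm (Fin n)) (j : Fin n) :
    Equiv.Perm.viaEmbeddingHom (Fin.castSuccEmb : Fin n ↪ Fin (n + 1)) σ (Fin.castSucc j)
      = Fin.castSucc (σ j) := by
  rw [Equiv.Perm.viaEmbeddingHom_apply]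
  exact Equiv.Perm.viaEmbedding_apply σ Fin.castSuccEmb j

lemma viaEmbedding_last (n : ℕ) (σ : Equiv.Perm (Fin n)) :
    Equiv.Perm.viaEmbeddingHom (Fin.castSuccEmb : Fin n ↪ Fin (n + 1)) σ (Fin.last n)
      = Fin.last n := by
  rw [Equiv.Perm.viaEmbeddingHom_apply]
  refine Equiv.Perm.viaEmbedding_apply_of_notMem σ Fin.castSuccEmb (Fin.last n) ?_
  rintro ⟨x, hx⟩
  simp only [Fin.coe_castSuccEmb] at hx
  exact (Fin.castSucc_lt_last x).ne hx

lemma sum_coeff_eq_zero (n : ℕ) (u : MonoidAlgebra ℂ (Equiv.Perm (Fin n)))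
    (hu0 : GrpOp ℂ (permRep n) 0 u = AlgOp ℂ (permRep n) 0 u) :
    (u.coeff.sum fun _ a => a) = 0 := by
  have h := (grp_eq_alg_iff ℂ (permRep n) 0 u).mp hu0 Fin.elim0
  have h1 : ∀ σ : Equiv.Perm (Fin n),
      algAlt ℂ (permRep n σ) 0 Fin.elim0 = (0 : ExteriorAlgebra ℂ (Fin n → ℂ)) := by
    intro σ
    rw [algAlt_apply']
    simp
  simp only [h1, smul_zero, ExteriorAlgebra.ιMulti_zero_apply] at h
  simp only [Finsupp.sum, Finset.sum_const_zero] at h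
  have h2 : ((∑ σ ∈ u.coeff.support, u.coeff σ) : ℂ) • (1 : ExteriorAlgebra ℂ (Fin n → ℂ)) = 0 := by
    rw [Finset.sum_smul]
    exact h
  rcases smul_eq_zero.mp h2 with h3 | h3
  · rw [Finsupp.sum]; exact h3
  · exact absurd h3 one_ne_zero

/-- The key "case A" computation: on a tuple of basis vectors avoiding the last
coordinate, the statement in `Λ ℂ^{n+1}` is the pushforward of the statement in
`Λ ℂ^n`. -/
lemma caseA (n : ℕ) (u : MonoidAlgebra ℂ (Equiv.Perm (Fin n)))
    (hu : ∀ m ≤ n, GrpOp ℂ (permRep n) m u = AlgOp ℂ (permRep n) m u)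
    (m : ℕ) (hm : m ≤ n) (j : Fin m → Fin n) :
    (u.coeff.sum fun σ a => a • ExteriorAlgebra.ιMulti ℂ m fun p =>
        permRep (n + 1) (Equiv.Perm.viaEmbeddingHom Fin.castSuccEmb σ)
          (Pi.single (Fin.castSucc (j p)) 1))
      = u.coeff.sum fun σ a => a •
          algAlt ℂ (permRep (n + 1) (Equiv.Perm.viaEmbeddingHom Fin.castSuccEmb σ)) m
            (fun p => Pi.single (Fin.castSucc (j p)) (1 : ℂ)) := by
  have key : ∀ (σ : Equiv.Perm (Fin n)) (p : Fin m),
      extL n (permRep n σ (Pi.single (j p) 1))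
        = permRep (n + 1) (Equiv.Perm.viaEmbeddingHom Fin.castSuccEmb σ)
            (Pi.single (Fin.castSucc (j p)) 1) := by
    intro σ p
    rw [permRep_single, extL_single, permRep_single, viaEmbedding_castSucc]
  have hbase : ∀ p : Fin m,
      extL n (Pi.single (j p) (1 : ℂ)) = Pi.single (Fin.castSucc (j p)) (1 : ℂ) :=
    fun p => extL_single n (j p)
  have h := (grp_eq_alg_iff ℂ (permRep n) m u).mp (hu m hm) (fun p => Pi.single (j p) 1)
  have h2 := congrArg (ExteriorAlgebra.map (extL n)) h
  rw [map_finsuppSum, map_finsuppSum] at h2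
  calc (u.coeff.sum fun σ a => a • ExteriorAlgebra.ιMulti ℂ m fun p =>
          permRep (n + 1) (Equiv.Perm.viaEmbeddingHom Fin.castSuccEmb σ)
            (Pi.single (Fin.castSucc (j p)) 1))
      = u.coeff.sum fun σ a => ExteriorAlgebra.map (extL n)
          (a • ExteriorAlgebra.ιMulti ℂ m (⇑(permRep n σ) ∘ fun p => Pi.single (j p) 1)) := by
        refine Finsupp.sum_congr fun σ _ => ?_
        rw [map_smul, ExteriorAlgebra.map_apply_ιMulti]
        refine congrArg (fun z => u.coeff σ • z) ?_
        refine congrArg (ExteriorAlgebra.ιMulti ℂ m) ?_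
        funext p
        exact (key σ p).symm
    _ = u.coeff.sum fun σ a => ExteriorAlgebra.map (extL n)
          (a • algAlt ℂ (permRep n σ) m fun p => Pi.single (j p) 1) := h2
    _ = u.coeff.sum fun σ a => a •
          algAlt ℂ (permRep (n + 1) (Equiv.Perm.viaEmbeddingHom Fin.castSuccEmb σ)) m
            (fun p => Pi.single (Fin.castSucc (j p)) (1 : ℂ)) := by
        refine Finsupp.sum_congr fun σ _ => ?_
        rw [map_smul]
        refine congrArg (fun z => u.coeff σ • z) ?_
        rw [algAlt_apply', algAlt_apply', map_sum]
        refine Finset.sum_congr rfl fun q _ => ?_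
        rw [ExteriorAlgebra.map_apply_ιMulti, Function.comp_update]
        refine congrArg (ExteriorAlgebra.ιMulti ℂ m) ?_
        have hv : ⇑(extL n) ∘ (fun p => Pi.single (j p) (1 : ℂ))
            = fun p => Pi.single (Fin.castSucc (j p)) (1 : ℂ) := by
          funext p
          exact hbase p
        rw [hv, key σ q]

lemma caseB_reduce {m : ℕ} {W Λ' : Type*} [AddCommGroup W] [Module ℂ W]
    [AddCommGroup Λ'] [Module ℂ Λ']
    (F G : W [⋀^Fin m]→ₗ[ℂ] Λ') (x : Fin m → W) (τ : Equiv.Perm (Fin m))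
    (h : F (x ∘ τ) = G (x ∘ τ)) : F x = G x := by
  rw [AlternatingMap.map_congr_perm (g := F) (v := x) τ, h,
    ← AlternatingMap.map_congr_perm (g := G) (v := x) τ]

lemma caseB_val (n : ℕ) (u : MonoidAlgebra ℂ (Equiv.Perm (Fin n)))
    (hu : ∀ m ≤ n, GrpOp ℂ (permRep n) m u = AlgOp ℂ (permRep n) m u)
    (m' : ℕ) (iv : Fin (m' + 1) → Fin (n + 1)) (hiv : Function.Injective iv)
    (h0 : iv 0 = Fin.last n) :
    (u.coeff.sum fun σ a => a • ExteriorAlgebra.ιMulti ℂ (m' + 1) fun p =>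
        permRep (n + 1) (Equiv.Perm.viaEmbeddingHom Fin.castSuccEmb σ) (Pi.single (iv p) 1))
      = u.coeff.sum fun σ a => a •
          algAlt ℂ (permRep (n + 1) (Equiv.Perm.viaEmbeddingHom Fin.castSuccEmb σ)) (m' + 1)
            (fun p => Pi.single (iv p) (1 : ℂ)) := by
  classical
  have hne : ∀ p' : Fin m', iv p'.succ ≠ Fin.last n := by
    intro p' hcon
    exact Fin.succ_ne_zero p' (hiv (hcon.trans h0.symm))
  have hlt : ∀ p' : Fin m', (iv p'.succ : ℕ) < n := fun p' => Fin.val_lt_last (hne p')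
  let j : Fin m' → Fin n := fun p' => Fin.castLT (iv p'.succ) (hlt p')
  have hj : ∀ p', Fin.castSucc (j p') = iv p'.succ := fun p' => Fin.castSucc_castLT _ _
  have hjinj : Function.Injective j := by
    intro a b hab
    exact Fin.succ_injective _ (hiv (by rw [← hj a, ← hj b, hab]))
  have hm'n : m' ≤ n := by simpa using Fintype.card_le_of_injective j hjinj
  -- abbreviations
  set c : Fin (n + 1) → ℂ := Pi.single (Fin.last n) 1 with hc
  set t : Fin m' → (Fin (n + 1) → ℂ) := fun p' => Pi.single (Fin.castSucc (j p')) 1 with htd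
  have hfix : ∀ σ : Equiv.Perm (Fin n),
      permRep (n + 1) (Equiv.Perm.viaEmbeddingHom Fin.castSuccEmb σ) c = c := by
    intro σ
    rw [hc, permRep_single, viaEmbedding_last]
  have e0 : (fun p => Pi.single (iv p) (1 : ℂ)) = (Fin.cons c t : Fin (m' + 1) → Fin (n + 1) → ℂ) := by
    funext p
    refine Fin.cases ?_ (fun p' => ?_) p
    · rw [show (Fin.cons c t : Fin (m' + 1) → Fin (n + 1) → ℂ) 0 = c by simp, h0, hc]
    · rw [show (Fin.cons c t : Fin (m' + 1) → Fin (n + 1) → ℂ) p'.succ = t p' by simp]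
      show Pi.single (iv p'.succ) 1 = Pi.single (Fin.castSucc (j p')) 1
      rw [hj]
  -- the case-A equality in degree m'
  have hA := caseA n u hu m' hm'n j
  -- multiply it on the left by ι c
  have hA2 := congrArg (LinearMap.mulLeft ℂ (ExteriorAlgebra.ι ℂ c)) hA
  rw [map_finsuppSum, map_finsuppSum] at hA2
  simp only [map_smul, LinearMap.mulLeft_apply] at hA2
  -- total coefficient is zero
  have hzero := sum_coeff_eq_zero n u (hu 0 (Nat.zero_le n))
  -- now compute both sides
  calc (u.coeff.sum fun σ a => a • ExteriorAlgebra.ιMulti ℂ (m' + 1) fun p =>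
          permRep (n + 1) (Equiv.Perm.viaEmbeddingHom Fin.castSuccEmb σ) (Pi.single (iv p) 1))
      = u.coeff.sum fun σ a => a • (ExteriorAlgebra.ι ℂ c *
          ExteriorAlgebra.ιMulti ℂ m' fun p' =>
            permRep (n + 1) (Equiv.Perm.viaEmbeddingHom Fin.castSuccEmb σ) (t p')) := by
        refine Finsupp.sum_congr fun σ _ => ?_
        congr 1
        have e1 : (fun p => permRep (n + 1) (Equiv.Perm.viaEmbeddingHom Fin.castSuccEmb σ)
              (Pi.single (iv p) 1))
            = (Fin.cons c (fun p' =>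
                permRep (n + 1) (Equiv.Perm.viaEmbeddingHom Fin.castSuccEmb σ) (t p'))
                  : Fin (m' + 1) → Fin (n + 1) → ℂ) := by
          funext p
          refine Fin.cases ?_ (fun p' => ?_) p
          · rw [show (Fin.cons c (fun p' =>
                permRep (n + 1) (Equiv.Perm.viaEmbeddingHom Fin.castSuccEmb σ) (t p'))
                  : Fin (m' + 1) → Fin (n + 1) → ℂ) 0 = c by simp]
            rw [h0, hc, permRep_single, viaEmbedding_last]
          · rw [show (Fin.cons c (fun p' =>
                permRep (n + 1) (Equiv.Perm.viaEmbeddingHom Fin.castSuccEmb σ) (t p'))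
                  : Fin (m' + 1) → Fin (n + 1) → ℂ) p'.succ
              = permRep (n + 1) (Equiv.Perm.viaEmbeddingHom Fin.castSuccEmb σ) (t p') by simp]
            show permRep (n + 1) (Equiv.Perm.viaEmbeddingHom Fin.castSuccEmb σ)
                (Pi.single (iv p'.succ) 1)
              = permRep (n + 1) (Equiv.Perm.viaEmbeddingHom Fin.castSuccEmb σ)
                (Pi.single (Fin.castSucc (j p')) 1)
            rw [hj]
        rw [e1, ιMulti_cons]
    _ = u.coeff.sum fun σ a => a • (ExteriorAlgebra.ι ℂ c *
          algAlt ℂ (permRep (n + 1) (Equiv.Perm.viaEmbeddingHom Fin.castSuccEmb σ)) m' t) := by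
        exact hA2
    _ = u.coeff.sum fun σ a => a •
          algAlt ℂ (permRep (n + 1) (Equiv.Perm.viaEmbeddingHom Fin.castSuccEmb σ)) (m' + 1)
            (fun p => Pi.single (iv p) (1 : ℂ)) := by
        have expand : ∀ σ : Equiv.Perm (Fin n),
            algAlt ℂ (permRep (n + 1) (Equiv.Perm.viaEmbeddingHom Fin.castSuccEmb σ)) (m' + 1)
              (fun p => Pi.single (iv p) (1 : ℂ))
            = ExteriorAlgebra.ιMulti ℂ (m' + 1) (Fin.cons c t : Fin (m' + 1) → Fin (n + 1) → ℂ) +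
              ExteriorAlgebra.ι ℂ c *
                algAlt ℂ (permRep (n + 1) (Equiv.Perm.viaEmbeddingHom Fin.castSuccEmb σ)) m' t := by
          intro σ
          rw [e0]
          exact algAlt_cons ℂ _ c t (hfix σ)
        have hsplit : (u.coeff.sum fun σ a =>
              a • ExteriorAlgebra.ιMulti ℂ (m' + 1) (Fin.cons c t : Fin (m' + 1) → Fin (n + 1) → ℂ)
              + a • (ExteriorAlgebra.ι ℂ c *
                  algAlt ℂ (permRep (n + 1) (Equiv.Perm.viaEmbeddingHom Fin.castSuccEmb σ)) m' t))
            = (u.coeff.sum fun _ a =>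
                a • ExteriorAlgebra.ιMulti ℂ (m' + 1) (Fin.cons c t : Fin (m' + 1) → Fin (n + 1) → ℂ))
              + u.coeff.sum fun σ a => a • (ExteriorAlgebra.ι ℂ c *
                  algAlt ℂ (permRep (n + 1) (Equiv.Perm.viaEmbeddingHom Fin.castSuccEmb σ)) m' t) :=
          Finset.sum_add_distrib
        have hz : (u.coeff.sum fun _ a =>
              a • ExteriorAlgebra.ιMulti ℂ (m' + 1) (Fin.cons c t : Fin (m' + 1) → Fin (n + 1) → ℂ))
            = 0 := by
          show (∑ σ ∈ u.coeff.support, u.coeff σ •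
              ExteriorAlgebra.ιMulti ℂ (m' + 1) (Fin.cons c t : Fin (m' + 1) → Fin (n + 1) → ℂ)) = 0
          rw [← Finset.sum_smul, show (∑ σ ∈ u.coeff.support, u.coeff σ) = 0 from hzero, zero_smul]
        calc (u.coeff.sum fun σ a => a • (ExteriorAlgebra.ι ℂ c *
                algAlt ℂ (permRep (n + 1) (Equiv.Perm.viaEmbeddingHom Fin.castSuccEmb σ)) m' t))
            = (u.coeff.sum fun _ a =>
                a • ExteriorAlgebra.ιMulti ℂ (m' + 1) (Fin.cons c t : Fin (m' + 1) → Fin (n + 1) → ℂ))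
              + u.coeff.sum fun σ a => a • (ExteriorAlgebra.ι ℂ c *
                  algAlt ℂ (permRep (n + 1) (Equiv.Perm.viaEmbeddingHom Fin.castSuccEmb σ)) m' t) := by
              rw [hz, zero_add]
          _ = u.coeff.sum fun σ a =>
                a • ExteriorAlgebra.ιMulti ℂ (m' + 1) (Fin.cons c t : Fin (m' + 1) → Fin (n + 1) → ℂ)
                + a • (ExteriorAlgebra.ι ℂ c *
                    algAlt ℂ (permRep (n + 1) (Equiv.Perm.viaEmbeddingHom Fin.castSuccEmb σ)) m' t) :=
              hsplit.symm
          _ = _ := by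
              refine Finsupp.sum_congr fun σ _ => ?_
              rw [expand σ, smul_add]

lemma iota_sum (n : ℕ) (u : MonoidAlgebra ℂ (Equiv.Perm (Fin n)))
    (F : Equiv.Perm (Fin (n + 1)) → ExteriorAlgebra ℂ (Fin (n + 1) → ℂ)) :
    ((iotaAlg n u).coeff.sum fun σ a => a • F σ)
      = u.coeff.sum fun σ a => a • F (Equiv.Perm.viaEmbeddingHom Fin.castSuccEmb σ) := by
  show (Finsupp.mapDomain (⇑(Equiv.Perm.viaEmbeddingHom Fin.castSuccEmb)) u.coeff).sum
      (fun σ a => a • F σ) = _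
  exact Finsupp.sum_mapDomain_index (fun g => zero_smul ℂ _) fun g a b => add_smul a b _

lemma mainAux (n : ℕ) (u : MonoidAlgebra ℂ (Equiv.Perm (Fin n)))
    (hu : ∀ m ≤ n, GrpOp ℂ (permRep n) m u = AlgOp ℂ (permRep n) m u)
    (m : ℕ) (iv : Fin m → Fin (n + 1)) (hiv : Function.Injective iv) :
    (u.coeff.sum fun σ a => a •
        (ExteriorAlgebra.ιMulti ℂ m).compLinearMap
          (permRep (n + 1) (Equiv.Perm.viaEmbeddingHom Fin.castSuccEmb σ) : Module.End ℂ (Fin (n+1) → ℂ)))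
        (fun p => Pi.single (iv p) (1 : ℂ))
      = (u.coeff.sum fun σ a => a •
          algAlt ℂ (permRep (n + 1) (Equiv.Perm.viaEmbeddingHom Fin.castSuccEmb σ)) m)
          (fun p => Pi.single (iv p) (1 : ℂ)) := by
  classical
  by_cases hlast : ∀ p, iv p ≠ Fin.last n
  · -- case A
    rw [altMap_finsupp_sum_apply, altMap_finsupp_sum_apply]
    simp only [AlternatingMap.compLinearMap_apply]
    let j : Fin m → Fin n := fun p => Fin.castLT (iv p) (Fin.val_lt_last (hlast p))
    have hj : ∀ p, Fin.castSucc (j p) = iv p := fun p => Fin.castSucc_castLT _ _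
    have hjinj : Function.Injective j := by
      intro a b hab
      exact hiv (by rw [← hj a, ← hj b, hab])
    have hmn : m ≤ n := by simpa using Fintype.card_le_of_injective j hjinj
    have h := caseA n u hu m hmn j
    simp only [hj] at h
    calc (u.coeff.sum fun σ a => a • ExteriorAlgebra.ιMulti ℂ m
            (⇑(permRep (n + 1) (Equiv.Perm.viaEmbeddingHom Fin.castSuccEmb σ)) ∘
              fun p => Pi.single (iv p) (1 : ℂ)))
        = u.coeff.sum fun σ a => a • ExteriorAlgebra.ιMulti ℂ m fun p =>
            permRep (n + 1) (Equiv.Perm.viaEmbeddingHom Fin.castSuccEmb σ)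
              (Pi.single (iv p) 1) := by
          refine Finsupp.sum_congr fun σ _ => ?_
          rw [Function.comp_def]
      _ = _ := h
  · -- case B
    push_neg at hlast
    obtain ⟨q, hq⟩ := hlast
    rcases m with _ | m'
    · exact q.elim0
    have hq' : iv q = Fin.last n := hq
    set τ : Equiv.Perm (Fin (m' + 1)) := Equiv.swap q 0 with hτ
    refine caseB_reduce _ _
      ((fun p => Pi.single (iv p) (1 : ℂ)) : Fin (m' + 1) → Fin (n + 1) → ℂ) τ ?_
    have hcomp : (((fun p => Pi.single (iv p) (1 : ℂ)) : Fin (m' + 1) → Fin (n + 1) → ℂ) ∘ τ)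
        = fun p => Pi.single ((iv ∘ τ) p) (1 : ℂ) := rfl
    rw [hcomp]
    have hiv' : Function.Injective (iv ∘ τ) := hiv.comp τ.injective
    have h0' : (iv ∘ τ) 0 = Fin.last n := by
      show iv (τ 0) = Fin.last n
      rw [hτ, Equiv.swap_apply_right, hq']
    rw [altMap_finsupp_sum_apply, altMap_finsupp_sum_apply]
    simp only [AlternatingMap.compLinearMap_apply]
    calc (u.coeff.sum fun σ a => a • ExteriorAlgebra.ιMulti ℂ (m' + 1)
            (⇑(permRep (n + 1) (Equiv.Perm.viaEmbeddingHom Fin.castSuccEmb σ)) ∘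
              fun p => Pi.single ((iv ∘ τ) p) (1 : ℂ)))
        = u.coeff.sum fun σ a => a • ExteriorAlgebra.ιMulti ℂ (m' + 1) fun p =>
            permRep (n + 1) (Equiv.Perm.viaEmbeddingHom Fin.castSuccEmb σ)
              (Pi.single ((iv ∘ τ) p) 1) := by
          refine Finsupp.sum_congr fun σ _ => ?_
          rw [Function.comp_def]
      _ = _ := caseB_val n u hu m' (iv ∘ τ) hiv' h0'

end MainProof

/-- `ι_n` maps Lie elements to Lie elements: if `Grp_m(u) = Alg_m(u)` on `Λ^m ℂ^n` for
all `m ≤ n`, then `Grp_m(ι_n(u)) = Alg_m(ι_n(u))` on `Λ^m ℂ^{n+1}` for all `m ≤ n+1`. -/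
theorem iotaAlg_lieElement (n : ℕ) (u : MonoidAlgebra ℂ (Equiv.Perm (Fin n)))
    (hu : ∀ m ≤ n, GrpOp ℂ (permRep n) m u = AlgOp ℂ (permRep n) m u) :
    ∀ m ≤ n + 1,
      GrpOp ℂ (permRep (n + 1)) m (iotaAlg n u) =
        AlgOp ℂ (permRep (n + 1)) m (iotaAlg n u) := by
  classical
  intro m hm
  rw [grp_eq_alg_iff]
  intro v
  rw [iota_sum n u (fun σ => ExteriorAlgebra.ιMulti ℂ m (⇑(permRep (n + 1) σ) ∘ v)),
      iota_sum n u (fun σ => algAlt ℂ (permRep (n + 1) σ) m v)]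
  have hmain :
      (u.coeff.sum fun σ a => a • (ExteriorAlgebra.ιMulti ℂ m).compLinearMap
          (permRep (n + 1) (Equiv.Perm.viaEmbeddingHom Fin.castSuccEmb σ)))
        = u.coeff.sum fun σ a => a •
            algAlt ℂ (permRep (n + 1) (Equiv.Perm.viaEmbeddingHom Fin.castSuccEmb σ)) m := by
    refine Module.Basis.ext_alternating (Pi.basisFun ℂ (Fin (n + 1))) ?_
    intro iv hiv
    have hb : ∀ l : Fin (n + 1), (Pi.basisFun ℂ (Fin (n + 1))) l = Pi.single l (1 : ℂ) :=
      fun l => by simp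
    simp only [hb]
    exact mainAux n u hu m iv hiv
  have hpt := congrArg (fun F => F v) hmain
  rw [altMap_finsupp_sum_apply, altMap_finsupp_sum_apply] at hpt
  simp only [AlternatingMap.compLinearMap_apply] at hpt
  exact hpt
end
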